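/- Under the hypotheses 1+α₁β < 0, 1+α₂β > 0, μ − k₁² − k₂² > 0, and F(k) < μ, the determinant det 𝒟(k) = (α₁β+1)(α₂β+1) − (2(1+β²)/R₀²)((α₁β+1)k₂² + (α₂β+1)k₁²) is negative, where R₀² = μ − k₁² − k₂² and F(k) = (1 + 2(1+β²)/(1+α₁β))k₁² + (1 + 2(1+β²)/(1+α₂β))k₂². -/

import Mathlib

/-- In the partly unstable region of case (b): `1+α₁β < 0`, `1+α₂β > 0`, and `F(k) < μ` imply
`det 𝒟(k) < 0`. -/
theorem detD_neg_case_b_partly_unstable (α₁ α₂ β μ k₁ k₂ : ℝ)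
    (h1 : 1 + α₁ * β < 0) (h2 : 1 + α₂ * β > 0)
    (hR : μ - k₁ ^ 2 - k₂ ^ 2 > 0)
    (hF : (1 + 2 * (1 + β ^ 2) / (1 + α₁ * β)) * k₁ ^ 2
        + (1 + 2 * (1 + β ^ 2) / (1 + α₂ * β)) * k₂ ^ 2 < μ) :
    (α₁ * β + 1) * (α₂ * β + 1)
      - (2 * (1 + β ^ 2) / (μ - k₁ ^ 2 - k₂ ^ 2))
          * ((α₁ * β + 1) * k₂ ^ 2 + (α₂ * β + 1) * k₁ ^ 2) < 0 := by
  have ha : (1 + α₁ * β) ≠ 0 := ne_of_lt h1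
  have hb : (1 + α₂ * β) ≠ 0 := ne_of_gt h2
  have hab : (1 + α₁ * β) * (1 + α₂ * β) < 0 := mul_neg_of_neg_of_pos h1 h2
  have hF' := mul_lt_mul_of_neg_left hF hab
  rw [sub_neg, show (2 * (1 + β ^ 2) / (μ - k₁ ^ 2 - k₂ ^ 2))
        * ((α₁ * β + 1) * k₂ ^ 2 + (α₂ * β + 1) * k₁ ^ 2)
      = (2 * (1 + β ^ 2) * ((α₁ * β + 1) * k₂ ^ 2 + (α₂ * β + 1) * k₁ ^ 2))
          / (μ - k₁ ^ 2 - k₂ ^ 2) from by ring, lt_div_iff₀ hR]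
  have e : (1 + α₁ * β) * (1 + α₂ * β) * ((1 + 2 * (1 + β ^ 2) / (1 + α₁ * β)) * k₁ ^ 2
      + (1 + 2 * (1 + β ^ 2) / (1 + α₂ * β)) * k₂ ^ 2)
      = (1 + α₂ * β) * (1 + α₁ * β + 2 * (1 + β ^ 2)) * k₁ ^ 2
        + (1 + α₁ * β) * (1 + α₂ * β + 2 * (1 + β ^ 2)) * k₂ ^ 2 := by
    have e1 : (1 + α₁ * β) * (2 * (1 + β ^ 2) / (1 + α₁ * β)) = 2 * (1 + β ^ 2) :=
      mul_div_cancel₀ _ ha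
    have e2 : (1 + α₂ * β) * (2 * (1 + β ^ 2) / (1 + α₂ * β)) = 2 * (1 + β ^ 2) :=
      mul_div_cancel₀ _ hb
    linear_combination (1 + α₂ * β) * k₁ ^ 2 * e1 + (1 + α₁ * β) * k₂ ^ 2 * e2
  rw [e] at hF'
  nlinarith [hF', sq_nonneg k₁, sq_nonneg k₂]
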